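/- arXiv:1809.10946 — 2 statements merged into one kernel-verified Lean document; each statement's English description precedes it below -/
import Mathlib

section
/- PT-entailment does not induce a rational conditional: let P = {f, p, r} consist of three distinct atoms and let K = {•⊤ → (¬p ∧ ¬r), •p → •¬f, •r → •f, p → ¬r}. Then •¬p → ¬r ∈ Cn_PT(K), but •¬p → ¬f ∉ Cn_PT(K) and •(¬p ∧ f) → ¬r ∉ Cn_PT(K). Consequently, the induced conditional relation |~_{Cn_PT(K)} violates Rational Monotonicity (RM) and is therefore not a rational conditional. -/
attribute [local instance] Classical.propDecidable

universe u

/-- Sentences of Propositional Typicality Logic over atoms `P`. -/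
inductive PTL (P : Type u) : Type u
  | atom : P → PTL P
  | neg  : PTL P → PTL P
  | conj : PTL P → PTL P → PTL P
  | top  : PTL P
  | bot  : PTL P
  | typ  : PTL P → PTL P

namespace PTL

/-- Material implication, defined from `¬` and `∧`. -/
def impl {P : Type u} (a b : PTL P) : PTL P := neg (conj a (neg b))

/-- Disjunction, defined from `¬` and `∧`. -/
def disj {P : Type u} (a b : PTL P) : PTL P := neg (conj (neg a) (neg b))

/-- Purely propositional sentences: no occurrence of the typicality operator. -/
def IsProp {P : Type u} : PTL P → Prop
  | atom _ => True
  | neg a => IsProp a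
  | conj a b => IsProp a ∧ IsProp b
  | top => True
  | bot => True
  | typ _ => False

end PTL

/-- Propositional valuations. -/
abbrev Val (P : Type u) := P → Bool

/-- Satisfaction of a PTL sentence by a valuation, relative to a ranking
function `rho : Val P → ℕ∞`. -/
def satR {P : Type u} (rho : Val P → ℕ∞) : Val P → PTL P → Prop
  | v, PTL.atom p => v p = true
  | v, PTL.neg a => ¬ satR rho v a
  | v, PTL.conj a b => satR rho v a ∧ satR rho v b
  | _, PTL.top => True
  | _, PTL.bot => False
  | v, PTL.typ a => satR rho v a ∧ ∀ v', rho v' < rho v → ¬ satR rho v' a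

/-- The convexity property of ranking functions. -/
def RkConvex {P : Type u} (rho : Val P → ℕ∞) : Prop :=
  ∀ (v : Val P) (i : ℕ), rho v = (i : ℕ∞) → ∀ j : ℕ, j < i → ∃ v', rho v' = (j : ℕ∞)

/-- A ranked interpretation: a convex ranking function on valuations. -/
structure RankedInterp (P : Type u) where
  rk : Val P → ℕ∞
  convex : RkConvex rk

/-- `rho` is a ranked model of `a`: every possible valuation satisfies `a`. -/
def modelsR {P : Type u} (rho : Val P → ℕ∞) (a : PTL P) : Prop :=
  ∀ v, rho v < ⊤ → satR rho v a

/-- `R ⊨ a`. -/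
def RankedInterp.models {P : Type u} (R : RankedInterp P) (a : PTL P) : Prop :=
  modelsR R.rk a

/-- `R` is a ranked model of the knowledge base `K`. -/
def modelsSet {P : Type u} (R : RankedInterp P) (K : Set (PTL P)) : Prop :=
  ∀ a ∈ K, R.models a

/-- Ranked entailment consequences of `K`. -/
def Cn0 {P : Type u} (K : Set (PTL P)) : Set (PTL P) :=
  {a | ∀ R : RankedInterp P, modelsSet R K → R.models a}

/-- The PT preference `⪯_PT` on ranking functions: pointwise comparison. -/
def PTle {P : Type u} (rho1 rho2 : Val P → ℕ∞) : Prop :=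
  ∀ w, rho1 w ≤ rho2 w

/-- Strict PT preference. -/
def PTlt {P : Type u} (rho1 rho2 : Val P → ℕ∞) : Prop :=
  PTle rho1 rho2 ∧ ¬ PTle rho2 rho1

/-- `Mod(K)`: the set of ranked models of `K`. -/
def ModSet {P : Type u} (K : Set (PTL P)) : Set (RankedInterp P) :=
  {R | modelsSet R K}

/-- The PT-minimal ranked models of `K`. -/
def minPT {P : Type u} (K : Set (PTL P)) : Set (RankedInterp P) :=
  {R ∈ ModSet K | ¬ ∃ R' ∈ ModSet K, PTlt R'.rk R.rk}

/-- PT-entailment consequences of `K`. -/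
def CnPT {P : Type u} (K : Set (PTL P)) : Set (PTL P) :=
  {a | ∀ R ∈ minPT K, R.models a}

/-- Classical propositional satisfaction (intended for purely propositional
sentences; `•` is vacuously false). -/
def psat {P : Type u} : Val P → PTL P → Prop
  | v, PTL.atom p => v p = true
  | v, PTL.neg a => ¬ psat v a
  | v, PTL.conj a b => psat v a ∧ psat v b
  | _, PTL.top => True
  | _, PTL.bot => False
  | _, PTL.typ _ => False

/-- Propositional tautology. -/
def Taut {P : Type u} (a : PTL P) : Prop := ∀ v : Val P, psat v a

/-- Biconditional. -/
def PTL.iffF {P : Type u} (a b : PTL P) : PTL P := PTL.conj (a.impl b) (b.impl a)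

/-- Rational Monotonicity (RM) for a conditional relation on `L`. -/
def SatisfiesRM {P : Type u} (C : PTL P → PTL P → Prop) : Prop :=
  ∀ a b c : PTL P, a.IsProp → b.IsProp → c.IsProp →
    C a c → ¬ C a (PTL.neg b) → C (PTL.conj a b) c

/-- A rational conditional on the purely propositional fragment `L`:
(Ref), (LLE), (And), (Or), (RW), (CM) and (RM). -/
def IsRationalConditional {P : Type u} (C : PTL P → PTL P → Prop) : Prop :=
  (∀ a : PTL P, a.IsProp → C a a) ∧
  (∀ a b c : PTL P, a.IsProp → b.IsProp → c.IsProp →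
    Taut (PTL.iffF a b) → C a c → C b c) ∧
  (∀ a b c : PTL P, a.IsProp → b.IsProp → c.IsProp →
    C a b → C a c → C a (PTL.conj b c)) ∧
  (∀ a b c : PTL P, a.IsProp → b.IsProp → c.IsProp →
    C a c → C b c → C (PTL.disj a b) c) ∧
  (∀ a b c : PTL P, a.IsProp → b.IsProp → c.IsProp →
    C a b → Taut (PTL.impl b c) → C a c) ∧
  (∀ a b c : PTL P, a.IsProp → b.IsProp → c.IsProp →
    C a b → C a c → C (PTL.conj a b) c) ∧
  SatisfiesRM C

/-- The conditional relation `|~_S` induced by a set `S` of PTL sentences. -/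
def inducedCond {P : Type u} (S : Set (PTL P)) (a b : PTL P) : Prop :=
  a.IsProp ∧ b.IsProp ∧ PTL.impl (PTL.typ a) b ∈ S

/-- The atom `f` ("flies"). -/
def fA : PTL (Fin 3) := PTL.atom 0
/-- The atom `p` ("penguin"). -/
def pA : PTL (Fin 3) := PTL.atom 1
/-- The atom `r` ("robin"). -/
def rA : PTL (Fin 3) := PTL.atom 2

/-- The knowledge base
`{•⊤ → (¬p ∧ ¬r), •p → •¬f, •r → •f, p → ¬r}`. -/
def Keg : Set (PTL (Fin 3)) :=
  {PTL.impl (PTL.typ PTL.top) (PTL.conj (PTL.neg pA) (PTL.neg rA)),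
   PTL.impl (PTL.typ pA) (PTL.typ (PTL.neg fA)),
   PTL.impl (PTL.typ rA) (PTL.typ fA),
   PTL.impl pA (PTL.neg rA)}

def decImp {p q : Prop} (dp : Decidable p) (dq : Decidable q) : Decidable (p → q) :=
  match dp with
  | .isFalse hp => .isTrue (fun h => absurd h hp)
  | .isTrue hp => match dq with
    | .isTrue hq => .isTrue (fun _ => hq)
    | .isFalse hq => .isFalse (fun h => hq (h hp))

def decSatR (rho : Val (Fin 3) → ℕ∞) : (a : PTL (Fin 3)) → (v : Val (Fin 3)) → Decidable (satR rho v a)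
  | .atom p, v => inferInstanceAs (Decidable (v p = true))
  | .neg a, v => @instDecidableNot _ (decSatR rho a v)
  | .conj a b, v => @instDecidableAnd _ _ (decSatR rho a v) (decSatR rho b v)
  | .top, _ => .isTrue trivial
  | .bot, _ => .isFalse (fun h => h)
  | .typ a, v =>
      @instDecidableAnd _ _ (decSatR rho a v)
        (@Fintype.decidableForallFintype _ _
          (fun v' => decImp (@WithTop.decidableLT ℕ _ (fun a b => Nat.decLt a b) (rho v') (rho v))
            (@instDecidableNot _ (decSatR rho a v'))) _)

attribute [instance 2000] decSatR

instance (priority := 2000) decModelsR (rho : Val (Fin 3) → ℕ∞) (a : PTL (Fin 3)) : Decidable (modelsR rho a) :=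
  @Fintype.decidableForallFintype _ _
    (fun v => decImp (@WithTop.decidableLT ℕ _ (fun a b => Nat.decLt a b) (rho v) ⊤) (decSatR rho a v)) _

def rho1 : Val (Fin 3) → ℕ∞ := fun v =>
  if v 1 then ⊤ else if v 2 then (if v 0 then 1 else 2) else (if v 0 then 1 else 0)

example : modelsR rho1 (PTL.impl (PTL.typ PTL.top) (PTL.conj (PTL.neg pA) (PTL.neg rA))) := by decide
example : modelsR rho1 (PTL.impl (PTL.typ pA) (PTL.typ (PTL.neg fA))) := by decide
example : modelsR rho1 (PTL.impl (PTL.typ rA) (PTL.typ fA)) := by decide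
example : modelsR rho1 (PTL.impl pA (PTL.neg rA)) := by decide

namespace PTLAux

abbrev V3 := Val (Fin 3)

def mkv (a b c : Bool) : V3 := ![a, b, c]

@[simp] lemma mkv0 (a b c : Bool) : mkv a b c 0 = a := rfl
@[simp] lemma mkv1 (a b c : Bool) : mkv a b c 1 = b := rfl
@[simp] lemma mkv2 (a b c : Bool) : mkv a b c 2 = c := rfl

lemma val_eq' {v : V3} {a b c : Bool} (h0 : v 0 = a) (h1 : v 1 = b) (h2 : v 2 = c) :
    v = mkv a b c := by
  funext i
  fin_cases i
  · exact h0
  · exact h1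
  · exact h2

lemma satR_impl (rho : V3 → ℕ∞) (v : V3) (a b : PTL (Fin 3)) :
    satR rho v (PTL.impl a b) ↔ (satR rho v a → satR rho v b) := by
  simp only [PTL.impl, satR]
  tauto

-- membership of axioms
lemma ax1_mem : PTL.impl (PTL.typ PTL.top) (PTL.conj (PTL.neg pA) (PTL.neg rA)) ∈ Keg := by
  simp [Keg]
lemma ax2_mem : PTL.impl (PTL.typ pA) (PTL.typ (PTL.neg fA)) ∈ Keg := by simp [Keg]
lemma ax3_mem : PTL.impl (PTL.typ rA) (PTL.typ fA) ∈ Keg := by simp [Keg]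
lemma ax4_mem : PTL.impl pA (PTL.neg rA) ∈ Keg := by simp [Keg]

variable {R : RankedInterp (Fin 3)}

/-- L1: rank-0 worlds satisfy ¬p ∧ ¬r. -/
lemma zero_world (hK : modelsSet R Keg) {v : V3} (hv : R.rk v = 0) :
    v 1 = false ∧ v 2 = false := by
  have h1 := hK _ ax1_mem v (by rw [hv]; exact WithTop.coe_lt_top 0)
  rw [satR_impl] at h1
  have h2 : satR R.rk v (PTL.typ PTL.top) := by
    refine ⟨trivial, fun v' hv' => ?_⟩
    rw [hv] at hv'
    exact absurd hv' (by simp)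
  have h3 := h1 h2
  simp only [satR, pA, rA] at h3
  exact ⟨Bool.not_eq_true _ ▸ h3.1, Bool.not_eq_true _ ▸ h3.2⟩

/-- L2: p ∧ r worlds are infinite. -/
lemma pr_inf (hK : modelsSet R Keg) {v : V3} (h1 : v 1 = true) (h2 : v 2 = true) :
    R.rk v = ⊤ := by
  by_contra hne
  have h := hK _ ax4_mem v (lt_top_iff_ne_top.mpr hne)
  rw [satR_impl] at h
  simp only [satR, pA, rA] at h
  exact (h h1) h2

/-- L3: if there is a rank-0 non-flying world, all p-worlds are infinite. -/
lemma p_inf (hK : modelsSet R Keg) {w : V3} (hw : R.rk w = 0) (hwf : w 0 = false) :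
    ∀ v : V3, v 1 = true → R.rk v = ⊤ := by
  intro v hv
  by_contra hne
  -- take a p-world of minimal rank
  obtain ⟨u, hu, humin⟩ := Finset.exists_min_image
    (Finset.univ.filter (fun x : V3 => x 1 = true ∧ R.rk x ≠ ⊤)) R.rk
    ⟨v, by simp [hv, hne]⟩
  simp only [Finset.mem_filter, Finset.mem_univ, true_and] at hu humin
  have hufin : R.rk u < ⊤ := lt_top_iff_ne_top.mpr hu.2
  have h := hK _ ax2_mem u hufin
  rw [satR_impl] at h
  have htp : satR R.rk u (PTL.typ pA) := by
    refine ⟨hu.1, fun v' hv' hp => ?_⟩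
    have : R.rk u ≤ R.rk v' := humin v' ⟨hp, (hv'.trans hufin).ne⟩
    exact absurd hv' (not_lt.mpr this)
  have h2 := h htp
  -- u satisfies •¬f, but w is a strictly lower ¬f world
  have hu0 : R.rk u ≠ 0 := fun h0 => by
    have := (zero_world hK h0).1; rw [hu.1] at this; simp at this
  have hwlt : R.rk w < R.rk u := by
    rw [hw]; exact pos_iff_ne_zero.mpr hu0
  have := h2.2 w hwlt
  simp only [satR, fA] at this
  rw [hwf] at this
  simp at this

/-- L4: if there is a rank-0 flying world, all r-worlds are infinite. -/
lemma r_inf (hK : modelsSet R Keg) {w : V3} (hw : R.rk w = 0) (hwf : w 0 = true) :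
    ∀ v : V3, v 2 = true → R.rk v = ⊤ := by
  intro v hv
  by_contra hne
  obtain ⟨u, hu, humin⟩ := Finset.exists_min_image
    (Finset.univ.filter (fun x : V3 => x 2 = true ∧ R.rk x ≠ ⊤)) R.rk
    ⟨v, by simp [hv, hne]⟩
  simp only [Finset.mem_filter, Finset.mem_univ, true_and] at hu humin
  have hufin : R.rk u < ⊤ := lt_top_iff_ne_top.mpr hu.2
  have h := hK _ ax3_mem u hufin
  rw [satR_impl] at h
  have htr : satR R.rk u (PTL.typ rA) := by
    refine ⟨hu.1, fun v' hv' hp => ?_⟩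
    have : R.rk u ≤ R.rk v' := humin v' ⟨hp, (hv'.trans hufin).ne⟩
    exact absurd hv' (not_lt.mpr this)
  have h2 := h htr
  have hu0 : R.rk u ≠ 0 := fun h0 => by
    have := (zero_world hK h0).2; rw [hu.1] at this; simp at this
  have hwlt : R.rk w < R.rk u := by
    rw [hw]; exact pos_iff_ne_zero.mpr hu0
  have := h2.2 w hwlt
  simp only [satR, fA] at this
  exact this hwf

end PTLAux

namespace PTLAux

/-- Part (a): `•¬p → ¬r` holds in every ranked model of Keg. -/
lemma part1 : PTL.impl (PTL.typ (PTL.neg pA)) (PTL.neg rA) ∈ CnPT Keg := by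
  intro R hR
  have hK : modelsSet R Keg := hR.1
  intro v hv
  rw [satR_impl]
  rintro ⟨hnp, hmin⟩
  -- claim R.rk v = 0
  have hv0 : R.rk v = 0 := by
    by_contra h0
    obtain ⟨i, hi⟩ := WithTop.ne_top_iff_exists.mp hv.ne
    have hipos : 0 < i := by
      rcases Nat.eq_zero_or_pos i with h | h
      · exact absurd (by rw [← hi, h]; rfl) h0
      · exact h
    obtain ⟨w, hw⟩ := R.convex v i hi.symm 0 hipos
    have hwlt : R.rk w < R.rk v := by
      rw [hw, ← hi]
      have : ((0:ℕ):ℕ∞) < (i:ℕ∞) := Nat.cast_lt.mpr hipos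
      exact this

    have hw1 := (zero_world hK hw).1
    have := hmin w hwlt
    simp only [satR, pA] at this
    rw [hw1] at this
    simp at this
  have := (zero_world hK hv0).2
  simp only [satR, rA]
  rw [this]
  simp

def rho2 : V3 → ℕ∞ := fun v => if v 1 || v 2 then ⊤ else 0

lemma conv2 : RkConvex rho2 := by
  intro v i hv j hj
  exfalso
  unfold rho2 at hv
  by_cases h : (v 1 || v 2) = true
  · rw [if_pos h] at hv
    exact WithTop.natCast_ne_top i hv.symm
  · rw [if_neg h] at hv
    have h0 : i = 0 := by exact_mod_cast hv.symm
    omega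

def R2 : RankedInterp (Fin 3) := ⟨rho2, conv2⟩

lemma R2_models : modelsSet R2 Keg := by
  intro a ha
  simp only [Keg, Set.mem_insert_iff, Set.mem_singleton_iff] at ha
  rcases ha with rfl | rfl | rfl | rfl <;>
    { show modelsR rho2 _
      decide }

def rho1 : V3 → ℕ∞ := fun v =>
  if v 1 then ⊤ else if v 2 then (if v 0 then 1 else 2) else (if v 0 then 1 else 0)

lemma conv1 : RkConvex rho1 := by
  intro v i hv j hj
  have hcases : rho1 v = 0 ∨ rho1 v = 1 ∨ rho1 v = 2 ∨ rho1 v = ⊤ := by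
    unfold rho1
    rcases h1 : v 1 with _|_ <;> rcases h2 : v 2 with _|_ <;> rcases h0 : v 0 with _|_ <;>
      simp [h0, h1, h2]
  have hi : i ≤ 2 := by
    rcases hcases with h | h | h | h <;> rw [hv] at h
    · have : i = 0 := by exact_mod_cast h
      omega
    · have : i = 1 := by exact_mod_cast h
      omega
    · have : i = 2 := by exact_mod_cast h
      omega
    · exact absurd h (WithTop.natCast_ne_top i)
  have hj2 : j < 2 := lt_of_lt_of_le hj hi
  interval_cases j
  · exact ⟨mkv false false false, by simp [rho1, mkv]⟩
  · exact ⟨mkv true false false, by simp [rho1, mkv]⟩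

def R1 : RankedInterp (Fin 3) := ⟨rho1, conv1⟩

lemma R1_models : modelsSet R1 Keg := by
  intro a ha
  simp only [Keg, Set.mem_insert_iff, Set.mem_singleton_iff] at ha
  rcases ha with rfl | rfl | rfl | rfl <;>
    { show modelsR rho1 _
      decide }

end PTLAux

namespace PTLAux

lemma R2_min : R2 ∈ minPT Keg := by
  refine ⟨R2_models, ?_⟩
  rintro ⟨R', hR', hle, hnle⟩
  apply hnle
  have h000 : R'.rk (mkv false false false) = 0 :=
    by simpa [R2, rho2] using hle (mkv false false false)
  have h100 : R'.rk (mkv true false false) = 0 :=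
    by simpa [R2, rho2] using hle (mkv true false false)
  have hp := p_inf hR' h000 rfl
  have hr := r_inf hR' h100 rfl
  intro w
  rcases h1 : w 1 with _|_
  · rcases h2 : w 2 with _|_
    · have : R2.rk w = 0 := by simp [R2, rho2, h1, h2]
      rw [this]
      exact zero_le
    · rw [hr w h2]
      exact le_top
  · rw [hp w h1]
    exact le_top

lemma le_one_of_lt_two {x : ℕ∞} (h : x < 2) : x ≤ 1 := by
  have h' : x < 1 + 1 := by
    rw [(by norm_num : (1:ℕ∞) + 1 = 2)]
    exact h
  exact (ENat.lt_add_one_iff (by simp)).mp h'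

lemma R1_min : R1 ∈ minPT Keg := by
  refine ⟨R1_models, ?_⟩
  rintro ⟨R', hR', hle, hnle⟩
  apply hnle
  have h000 : R'.rk (mkv false false false) = 0 :=
    by simpa [R1, rho1] using hle (mkv false false false)
  have hp := p_inf hR' h000 rfl
  have h101le : R'.rk (mkv true false true) ≤ 1 := by
    simpa [R1, rho1] using hle (mkv true false true)
  have hnof : ∀ w : V3, R'.rk w = 0 → w 0 = false := by
    intro w hw
    by_contra hwt
    have hwt' : w 0 = true := by
      rcases h0 : w 0 with _|_
      · exact absurd h0 hwt
      · rfl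
    have := r_inf hR' hw hwt' (mkv true false true) rfl
    rw [this] at h101le
    exact absurd h101le (by simp)
  have h100ge : 1 ≤ R'.rk (mkv true false false) := by
    rw [ENat.one_le_iff_ne_zero]
    intro h0
    have := hnof _ h0
    simp at this
  have h101ge : 1 ≤ R'.rk (mkv true false true) := by
    rw [ENat.one_le_iff_ne_zero]
    intro h0
    have := hnof _ h0
    simp at this
  have h001ge : 2 ≤ R'.rk (mkv false false true) := by
    by_contra hlt
    push_neg at hlt
    have h001le1 : R'.rk (mkv false false true) ≤ 1 := le_one_of_lt_two hlt
    have hfin : R'.rk (mkv false false true) < ⊤ :=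
      lt_of_le_of_lt h001le1 (lt_top_iff_ne_top.mpr (by norm_num))
    have hax3 := hR' _ ax3_mem _ hfin
    rw [satR_impl] at hax3
    have htyp : satR R'.rk (mkv false false true) (PTL.typ rA) := by
      refine ⟨rfl, ?_⟩
      intro v' hlt' hsat
      simp only [satR, rA] at hsat
      have hv'0 : R'.rk v' = 0 :=
        ENat.lt_one_iff_eq_zero.mp (lt_of_lt_of_le hlt' h001le1)
      have := (zero_world hR' hv'0).2
      rw [hsat] at this
      simp at this
    have hf := (hax3 htyp).1
    simp only [satR, fA] at hf
    simp at hf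
  intro w
  rcases h1 : w 1 with _|_
  · rcases h2 : w 2 with _|_
    · rcases h0 : w 0 with _|_
      · have : R1.rk w = 0 := by simp [R1, rho1, h0, h1, h2]
        rw [this]
        exact zero_le
      · have hw : w = mkv true false false := val_eq' h0 h1 h2
        have h : R1.rk w = 1 := by simp [R1, rho1, h0, h1, h2]
        rw [h, hw]
        exact h100ge
    · rcases h0 : w 0 with _|_
      · have hw : w = mkv false false true := val_eq' h0 h1 h2
        have h : R1.rk w = 2 := by simp [R1, rho1, h0, h1, h2]
        rw [h, hw]
        exact h001ge
      · have hw : w = mkv true false true := val_eq' h0 h1 h2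
        have h : R1.rk w = 1 := by simp [R1, rho1, h0, h1, h2]
        rw [h, hw]
        exact h101ge
  · rw [hp w h1]
    exact le_top

lemma part2 : PTL.impl (PTL.typ (PTL.neg pA)) (PTL.neg fA) ∉ CnPT Keg := by
  intro h
  have hm := h R2 R2_min (mkv true false false)
    (lt_top_iff_ne_top.mpr (fun hh => by simp [R2, rho2] at hh))
  have hn : ¬ satR rho2 (mkv true false false)
      (PTL.impl (PTL.typ (PTL.neg pA)) (PTL.neg fA)) := by decide
  exact hn hm

lemma part3 : PTL.impl (PTL.typ (PTL.conj (PTL.neg pA) fA)) (PTL.neg rA) ∉ CnPT Keg := by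
  intro h
  have hm := h R1 R1_min (mkv true false true)
    (lt_top_iff_ne_top.mpr (fun hh => by simp [R1, rho1] at hh))
  have hn : ¬ satR rho1 (mkv true false true)
      (PTL.impl (PTL.typ (PTL.conj (PTL.neg pA) fA)) (PTL.neg rA)) := by decide
  exact hn hm

lemma part4 : ¬ SatisfiesRM (inducedCond (CnPT Keg)) := by
  intro hRM
  have h := hRM (PTL.neg pA) fA (PTL.neg rA) trivial trivial trivial
    ⟨trivial, trivial, part1⟩
    (fun hc => part2 hc.2.2)
  exact part3 h.2.2

end PTLAux

/-- for the example knowledge base, `•¬p → ¬r ∈ Cn_PT(K)` but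
`•¬p → ¬f ∉ Cn_PT(K)` and `•(¬p ∧ f) → ¬r ∉ Cn_PT(K)`; consequently the
induced conditional violates (RM) and is not a rational conditional. -/
theorem ptl_CnPT_not_rational :
    PTL.impl (PTL.typ (PTL.neg pA)) (PTL.neg rA) ∈ CnPT Keg ∧
    PTL.impl (PTL.typ (PTL.neg pA)) (PTL.neg fA) ∉ CnPT Keg ∧
    PTL.impl (PTL.typ (PTL.conj (PTL.neg pA) fA)) (PTL.neg rA) ∉ CnPT Keg ∧
    ¬ SatisfiesRM (inducedCond (CnPT Keg)) ∧
    ¬ IsRationalConditional (inducedCond (CnPT Keg)) := by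
  refine ⟨PTLAux.part1, PTLAux.part2, PTLAux.part3, PTLAux.part4, ?_⟩
  intro h
  exact PTLAux.part4 h.2.2.2.2.2.2
end

section
/- Let C be a satisfiable set of conditionals and let 𝔯 be a finite nonempty set of ranked models of C. Then the ranked union R^𝔯 of 𝔯 is a ranked model of C, and R^𝔯 ≺_LM R for every R ∈ 𝔯 with R ≠ R^𝔯. -/
attribute [local instance] Classical.propDecidable

universe u

/-- `rho` satisfies the conditional `a |~ b`: every `≺`-minimal possible
`a`-valuation satisfies `b`. -/
def condSatRho {P : Type u} (rho : Val P → ℕ∞) (a b : PTL P) : Prop :=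
  ∀ v, rho v < ⊤ → satR rho v a →
    (∀ u, rho u < ⊤ → satR rho u a → ¬ rho u < rho v) → satR rho v b

/-- The cell of rank `i` of a ranking function. -/
def cell {P : Type u} (rho : Val P → ℕ∞) (i : ℕ∞) : Set (Val P) :=
  {u | rho u = i}

/-- The LM preference `⪯_LM` on ranking functions: either all cells coincide,
or the cell of the first differing (finite) rank shrinks. -/
def LMle {P : Type u} (rho1 rho2 : Val P → ℕ∞) : Prop :=
  (∀ i : ℕ∞, cell rho1 i = cell rho2 i) ∨
  ∃ j : ℕ, (∀ k : ℕ, k < j → cell rho1 (k : ℕ∞) = cell rho2 (k : ℕ∞)) ∧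
    cell rho1 (j : ℕ∞) ≠ cell rho2 (j : ℕ∞) ∧ cell rho2 (j : ℕ∞) ⊆ cell rho1 (j : ℕ∞)

/-- Strict LM preference. -/
def LMlt {P : Type u} (rho1 rho2 : Val P → ℕ∞) : Prop :=
  LMle rho1 rho2 ∧ ¬ LMle rho2 rho1

/-- Pointwise minimum rank over a set of ranked interpretations. -/
noncomputable def munion {P : Type u} (Ms : Set (RankedInterp P)) (v : Val P) : ℕ∞ :=
  ⨅ R ∈ Ms, R.rk v

/-- The ranked union of a set of ranked interpretations: finite minimum ranks
are relabelled order-isomorphically onto an initial segment of `ℕ`. -/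
noncomputable def rankedUnion {P : Type u} (Ms : Set (RankedInterp P)) : Val P → ℕ∞ :=
  fun v =>
    if munion Ms v = ⊤ then ⊤
    else (({x : ℕ∞ | (∃ u, munion Ms u = x) ∧ x < munion Ms v}.ncard : ℕ) : ℕ∞)

section PTLAux
set_option linter.unusedSectionVars false
set_option linter.unusedVariables false

variable {P : Type u} [Fintype P]

lemma enat_exists (x : ℕ∞) (h : x ≠ ⊤) : ∃ n : ℕ, x = (n : ℕ∞) := by
  lift x to ℕ using h; exact ⟨_, rfl⟩

/-- Satisfaction of a purely propositional sentence does not depend on the ranking. -/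
lemma satR_prop_iff (rho1 rho2 : Val P → ℕ∞) (v : Val P) :
    ∀ a : PTL P, a.IsProp → (satR rho1 v a ↔ satR rho2 v a) := by
  intro a
  induction a with
  | atom p => intro _; exact Iff.rfl
  | neg a ih => intro h; exact not_congr (ih h)
  | conj a b iha ihb => intro h; exact and_congr (iha h.1) (ihb h.2)
  | top => intro _; exact Iff.rfl
  | bot => intro _; exact Iff.rfl
  | typ a ih => intro h; exact h.elim

variable (Ms : Set (RankedInterp P))

lemma munion_le {R : RankedInterp P} (hR : R ∈ Ms) (v : Val P) :
    munion Ms v ≤ R.rk v := iInf₂_le R hR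

lemma munion_attained (hfin : Ms.Finite) (hne : Ms.Nonempty) (v : Val P) :
    ∃ R ∈ Ms, R.rk v = munion Ms v := by
  have h1 : munion Ms v = sInf ((fun R => R.rk v) '' Ms) := sInf_image.symm
  have h2 : sInf ((fun R => R.rk v) '' Ms) ∈ (fun R => R.rk v) '' Ms :=
    (hne.image _).csInf_mem (hfin.image _)
  rw [h1]
  obtain ⟨R, hR, hEq⟩ := h2
  exact ⟨R, hR, hEq⟩

/-- The set of attained minimum ranks below the rank of `v`. -/
def Tset (v : Val P) : Set ℕ∞ :=
  {x : ℕ∞ | (∃ u, munion Ms u = x) ∧ x < munion Ms v}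

lemma Tset_finite (v : Val P) : (Tset Ms v).Finite :=
  (Set.finite_range (munion Ms)).subset (fun x hx => hx.1.imp (fun _ h => h))

lemma rankedUnion_eq (v : Val P) (h : munion Ms v ≠ ⊤) :
    rankedUnion Ms v = (((Tset Ms v).ncard : ℕ) : ℕ∞) := by
  simp only [rankedUnion, if_neg h]; rfl

lemma rankedUnion_top_iff (v : Val P) :
    rankedUnion Ms v = ⊤ ↔ munion Ms v = ⊤ := by
  constructor
  · intro h
    by_contra hm
    rw [rankedUnion_eq Ms v hm] at h
    exact ENat.coe_ne_top _ h
  · intro h; simp only [rankedUnion, if_pos h]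

lemma rankedUnion_mono {u v : Val P} (h : munion Ms u ≤ munion Ms v) :
    rankedUnion Ms u ≤ rankedUnion Ms v := by
  rcases eq_or_ne (munion Ms v) ⊤ with hv | hv
  · rw [(rankedUnion_top_iff Ms v).mpr hv]; exact le_top
  · have hu : munion Ms u ≠ ⊤ := fun h' => hv (top_le_iff.mp (h' ▸ h))
    rw [rankedUnion_eq Ms u hu, rankedUnion_eq Ms v hv]
    exact Nat.cast_le.mpr (Set.ncard_le_ncard
      (fun x hx => ⟨hx.1, lt_of_lt_of_le hx.2 h⟩) (Tset_finite Ms v))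

lemma rankedUnion_strict {u v : Val P} (h : munion Ms u < munion Ms v) :
    rankedUnion Ms u < rankedUnion Ms v := by
  have hu : munion Ms u ≠ ⊤ := h.ne_top
  rcases eq_or_ne (munion Ms v) ⊤ with hv | hv
  · rw [(rankedUnion_top_iff Ms v).mpr hv]
    exact lt_top_iff_ne_top.mpr (fun h' => hu ((rankedUnion_top_iff Ms u).mp h'))
  · rw [rankedUnion_eq Ms u hu, rankedUnion_eq Ms v hv]
    refine Nat.cast_lt.mpr (Set.ncard_lt_ncard ?_ (Tset_finite Ms v))
    constructor
    · exact fun x hx => ⟨hx.1, hx.2.trans h⟩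
    · intro hsub
      have : munion Ms u ∈ Tset Ms v := ⟨⟨u, rfl⟩, h⟩
      exact absurd (hsub this).2 (lt_irrefl _)

lemma rankedUnion_lt_iff (u v : Val P) :
    rankedUnion Ms u < rankedUnion Ms v ↔ munion Ms u < munion Ms v := by
  constructor
  · intro h
    by_contra hc
    exact absurd (rankedUnion_mono Ms (not_lt.mp hc)) (not_le.mpr h)
  · exact rankedUnion_strict Ms

lemma rankedUnion_le_munion (v : Val P) : rankedUnion Ms v ≤ munion Ms v := by
  rcases eq_or_ne (munion Ms v) ⊤ with hv | hv
  · rw [hv]; exact le_top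
  · obtain ⟨n, hn⟩ := enat_exists _ hv
    rw [rankedUnion_eq Ms v hv, hn]
    refine Nat.cast_le.mpr ?_
    have hIio : (Set.Iio n).ncard = n := by
      rw [← Finset.coe_Iio, Set.ncard_coe_finset, Nat.card_Iio]
    rw [← hIio]
    refine Set.ncard_le_ncard_of_injOn ENat.toNat ?_ ?_ (Set.finite_Iio n)
    · intro x hx
      have hxn : x < (n : ℕ∞) := hn ▸ hx.2
      obtain ⟨k, rfl⟩ := enat_exists x hxn.ne_top
      simpa using Nat.cast_lt.mp hxn
    · intro x hx y hy hxy
      have hxn : x < (n : ℕ∞) := hn ▸ hx.2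
      have hyn : y < (n : ℕ∞) := hn ▸ hy.2
      obtain ⟨k, rfl⟩ := enat_exists x hxn.ne_top
      obtain ⟨l, rfl⟩ := enat_exists y hyn.ne_top
      simp only [ENat.toNat_coe] at hxy
      exact congrArg Nat.cast hxy

lemma rankedUnion_step (v : Val P) (i : ℕ)
    (h : rankedUnion Ms v = ((i + 1 : ℕ) : ℕ∞)) :
    ∃ v', rankedUnion Ms v' = (i : ℕ∞) := by
  have hm : munion Ms v ≠ ⊤ := by
    intro htop
    rw [(rankedUnion_top_iff Ms v).mpr htop] at h
    exact ENat.coe_ne_top _ h.symm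
  rw [rankedUnion_eq Ms v hm] at h
  have hcard : (Tset Ms v).ncard = i + 1 := Nat.cast_inj.mp h
  have hfinT := Tset_finite Ms v
  have hneT : (Tset Ms v).Nonempty := by
    rw [Set.nonempty_iff_ne_empty]
    intro hemp
    rw [hemp, Set.ncard_empty] at hcard
    omega
  obtain ⟨x, hxT, hxmax⟩ := Set.Finite.exists_maximalFor id _ hfinT hneT
  have hxmax' : ∀ y ∈ Tset Ms v, y ≤ x :=
    fun y hy => le_of_not_gt (fun hlt => absurd (hxmax hy hlt.le) (not_le.mpr hlt))
  obtain ⟨u, hu⟩ := hxT.1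
  have hxlt : x < munion Ms v := hxT.2
  have hxtop : munion Ms u ≠ ⊤ := by rw [hu]; exact hxlt.ne_top
  have hTu : Tset Ms u = Tset Ms v \ {x} := by
    ext y
    constructor
    · rintro ⟨hy1, hy2⟩
      rw [hu] at hy2
      exact ⟨⟨hy1, hy2.trans hxlt⟩, fun hyx => absurd (hyx ▸ hy2) (lt_irrefl x)⟩
    · rintro ⟨⟨hy1, hy2⟩, hyx⟩
      refine ⟨hy1, ?_⟩
      rw [hu]
      exact lt_of_le_of_ne (hxmax' y ⟨hy1, hy2⟩) (by simpa using hyx)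
  refine ⟨u, ?_⟩
  rw [rankedUnion_eq Ms u hxtop, hTu,
    Set.ncard_diff_singleton_of_mem hxT, hcard]
  simp

lemma rankedUnion_convex_aux (i : ℕ) :
    ∀ v : Val P, rankedUnion Ms v = (i : ℕ∞) →
      ∀ j : ℕ, j < i → ∃ v', rankedUnion Ms v' = (j : ℕ∞) := by
  induction i with
  | zero => intro v _ j hj; omega
  | succ i ih =>
    intro v h j hj
    obtain ⟨v', hv'⟩ := rankedUnion_step Ms v i h
    rcases Nat.lt_succ_iff_lt_or_eq.mp hj with hj' | rfl
    · exact ih v' hv' j hj'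
    · exact ⟨v', hv'⟩

end PTLAux

/-- the ranked union of a finite nonempty set of ranked models
of a satisfiable set of conditionals `C` is a ranked interpretation and a
ranked model of `C`, and is strictly LM-preferred to every other member. -/
theorem ptl_ranked_union_model {P : Type u} [Fintype P] [DecidableEq P]
    (C : Set (PTL P × PTL P)) (hprop : ∀ c ∈ C, c.1.IsProp ∧ c.2.IsProp)
    (hsat : ∃ R : RankedInterp P, (∃ v, R.rk v < ⊤) ∧
      ∀ c ∈ C, condSatRho R.rk c.1 c.2)
    (Ms : Set (RankedInterp P)) (hfin : Ms.Finite) (hne : Ms.Nonempty)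
    (hmod : ∀ R ∈ Ms, ∀ c ∈ C, condSatRho R.rk c.1 c.2) :
    RkConvex (rankedUnion Ms) ∧
    (∀ c ∈ C, condSatRho (rankedUnion Ms) c.1 c.2) ∧
    (∀ R ∈ Ms, R.rk ≠ rankedUnion Ms → LMlt (rankedUnion Ms) R.rk) := by
  refine ⟨?_, ?_, ?_⟩
  · -- convexity
    intro v i hvi j hj
    exact rankedUnion_convex_aux Ms i v hvi j hj
  · -- model of C
    intro c hc v hvtop hva hmin
    have hm : munion Ms v ≠ ⊤ := fun h =>
      absurd ((rankedUnion_top_iff Ms v).mpr h) hvtop.ne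
    obtain ⟨R, hR, hRv⟩ := munion_attained Ms hfin hne v
    have hRvlt : R.rk v < ⊤ := by rw [hRv]; exact lt_top_iff_ne_top.mpr hm
    have hva' : satR R.rk v c.1 :=
      (satR_prop_iff (rankedUnion Ms) R.rk v c.1 (hprop c hc).1).mp hva
    have hmin' : ∀ u, R.rk u < ⊤ → satR R.rk u c.1 → ¬ R.rk u < R.rk v := by
      intro u hu hua hlt
      have h1 : munion Ms u < munion Ms v := by
        rw [← hRv]; exact lt_of_le_of_lt (munion_le Ms hR u) hlt
      have h2 : rankedUnion Ms u < rankedUnion Ms v := rankedUnion_strict Ms h1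
      have h3 : rankedUnion Ms u < ⊤ := lt_top_iff_ne_top.mpr (fun h =>
        h1.ne_top ((rankedUnion_top_iff Ms u).mp h))
      have h4 : satR (rankedUnion Ms) u c.1 :=
        (satR_prop_iff R.rk (rankedUnion Ms) u c.1 (hprop c hc).1).mp hua
      exact hmin u h3 h4 h2
    exact (satR_prop_iff R.rk (rankedUnion Ms) v c.2 (hprop c hc).2).mp
      (hmod R hR c hc v hRvlt hva' hmin')
  · -- LM preference
    intro R hR hneq
    have hpt : ∀ v, rankedUnion Ms v ≤ R.rk v :=
      fun v => (rankedUnion_le_munion Ms v).trans (munion_le Ms hR v)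
    have hdiff : ∃ j : ℕ, cell (rankedUnion Ms) (j : ℕ∞) ≠ cell R.rk (j : ℕ∞) := by
      by_contra hco
      push_neg at hco
      apply hneq
      funext v
      rcases eq_or_ne (rankedUnion Ms v) ⊤ with htop | hfin'
      · have hRt : R.rk v = ⊤ := by
          by_contra hRt
          obtain ⟨n, hn⟩ := enat_exists _ hRt
          have hmem : v ∈ cell R.rk (n : ℕ∞) := hn
          rw [← hco n] at hmem
          have : rankedUnion Ms v = (n : ℕ∞) := hmem
          exact ENat.coe_ne_top n (this ▸ htop)
        rw [hRt, htop]
      · obtain ⟨n, hn⟩ := enat_exists _ hfin'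
        have hmem : v ∈ cell (rankedUnion Ms) (n : ℕ∞) := hn
        rw [hco n] at hmem
        have : R.rk v = (n : ℕ∞) := hmem
        rw [this, hn]
    have hj := Nat.find_spec hdiff
    have hminc : ∀ k : ℕ, k < Nat.find hdiff →
        cell (rankedUnion Ms) (k : ℕ∞) = cell R.rk (k : ℕ∞) :=
      fun k hk => not_not.mp (Nat.find_min hdiff hk)
    have hsub : cell R.rk ((Nat.find hdiff : ℕ) : ℕ∞) ⊆
        cell (rankedUnion Ms) ((Nat.find hdiff : ℕ) : ℕ∞) := by
      intro v hv
      have hv' : R.rk v = ((Nat.find hdiff : ℕ) : ℕ∞) := hv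
      have hle : rankedUnion Ms v ≤ ((Nat.find hdiff : ℕ) : ℕ∞) := by
        rw [← hv']; exact hpt v
      have hnt : rankedUnion Ms v ≠ ⊤ := fun h => by
        rw [h] at hle
        exact ENat.coe_ne_top _ (top_le_iff.mp hle)
      obtain ⟨k, hk⟩ := enat_exists _ hnt
      have hkle : k ≤ Nat.find hdiff := by
        rw [hk] at hle; exact Nat.cast_le.mp hle
      rcases lt_or_eq_of_le hkle with hlt | heq
      · exfalso
        have hmem : v ∈ cell (rankedUnion Ms) (k : ℕ∞) := hk
        rw [hminc k hlt] at hmem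
        have hmem' : R.rk v = (k : ℕ∞) := hmem
        rw [hv'] at hmem'
        exact absurd (Nat.cast_inj.mp hmem'.symm) hlt.ne
      · show rankedUnion Ms v = _
        rw [hk, heq]
    have hLe : LMle (rankedUnion Ms) R.rk := Or.inr ⟨Nat.find hdiff, hminc, hj, hsub⟩
    refine ⟨hLe, ?_⟩
    rintro (hall | ⟨j', hbelow, hne2, hsub2⟩)
    · exact hj (hall _).symm
    · have hjj : j' = Nat.find hdiff := by
        rcases lt_trichotomy j' (Nat.find hdiff) with h1 | h1 | h1
        · exact absurd (hminc j' h1).symm hne2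
        · exact h1
        · exact absurd (hbelow _ h1).symm hj
      subst hjj
      exact hne2 (Set.Subset.antisymm hsub hsub2)
end
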